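/- Let n, m be supernatural numbers. Then ℚ(n) = ℚ(m) as subgroups of ℚ if and only if n and m have the same exponent sequence, and more generally there exists a positive rational q with q·ℚ(n) = ℚ(m) if and only if n and m are finitely equivalent. -/

import Mathlib

/-- A positive integer `b` divides the supernatural number `r` if every prime occurs
in `b` with multiplicity at most `r p`. -/
def dividesSupernatural (b : ℕ) (r : Nat.Primes → ℕ∞) : Prop :=
  ∀ p : Nat.Primes, ((Nat.factorization b p.1 : ℕ∞)) ≤ r p

/-- `ℚ(n)`: rationals `a/b` with `a ∈ ℤ` and `b` a positive integer dividing `n`. -/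
def Qsup (r : Nat.Primes → ℕ∞) : Set ℚ :=
  {q : ℚ | ∃ a : ℤ, ∃ b : ℕ, 0 < b ∧ dividesSupernatural b r ∧ q = (a : ℚ) / (b : ℚ)}

lemma den_fact {p : ℕ} (hp : p.Prime) (x : ℚ) :
    x.den.factorization p = (-(padicValRat p x)).toNat := by
  rw [Nat.factorization_def _ hp, padicValRat_def]
  by_cases h : p ∣ x.den
  · have hnum : padicValInt p x.num = 0 := by
      apply padicValInt.eq_zero_of_not_dvd
      intro hd
      have h1 : p ∣ Nat.gcd x.num.natAbs x.den :=
        Nat.dvd_gcd (Int.ofNat_dvd_left.mp hd) h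
      rw [x.reduced] at h1
      exact hp.one_lt.ne' (Nat.dvd_one.mp h1)
    omega
  · have hden : padicValNat p x.den = 0 := padicValNat.eq_zero_of_not_dvd h
    omega

lemma mem_Qsup {r : Nat.Primes → ℕ∞} {x : ℚ} :
    x ∈ Qsup r ↔ ∀ p : Nat.Primes, (x.den.factorization p.1 : ℕ∞) ≤ r p := by
  constructor
  · rintro ⟨a, b, hb, hdvd, rfl⟩ p
    have hd : ((a:ℚ)/(b:ℚ)).den ∣ b := by
      have := Rat.den_dvd a (b:ℤ)
      rw [Rat.divInt_eq_div] at this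
      exact_mod_cast this
    refine le_trans ?_ (hdvd p)
    have hden : ((a:ℚ)/(b:ℚ)).den ≠ 0 := ((a:ℚ)/(b:ℚ)).den_nz
    have := (Nat.factorization_le_iff_dvd hden hb.ne' ).mpr hd
    exact_mod_cast this p.1
  · intro h
    exact ⟨x.num, x.den, x.pos, fun p => h p, (Rat.num_div_den x).symm⟩

lemma Qsup_pow_mem {r : Nat.Primes → ℕ∞} (p : Nat.Primes) {k : ℕ} (hk : (k:ℕ∞) ≤ r p) :
    ((p.1:ℚ)^k)⁻¹ ∈ Qsup r := by
  refine ⟨1, p.1^k, pow_pos p.2.pos k, ?_, by push_cast; rw [one_div]⟩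
  intro q
  rw [p.2.factorization_pow, Finsupp.single_apply]
  rcases eq_or_ne q p with rfl | hq
  · rw [if_pos rfl]; exact hk
  · rw [if_neg (fun hqp => hq (Subtype.ext hqp.symm))]; simp

lemma pinv_ne (p : Nat.Primes) (k : ℕ) : ((p.1:ℚ)^k)⁻¹ ≠ 0 :=
  inv_ne_zero (pow_ne_zero _ (Nat.cast_ne_zero.mpr p.2.pos.ne'))

lemma val_pow_inv (p : Nat.Primes) (k : ℕ) :
    padicValRat p.1 (((p.1:ℚ)^k)⁻¹) = -(k:ℤ) := by
  haveI := Fact.mk p.2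
  rw [padicValRat.inv, show ((p.1:ℚ)^k) = ((p.1^k : ℕ) : ℚ) by push_cast; ring,
    padicValRat.of_nat, padicValNat.prime_pow]

lemma mul_mem_Qsup {r s : Nat.Primes → ℕ∞} {a b : ℕ} (ha : 0 < a) (hb : 0 < b)
    (h : ∀ p : Nat.Primes, r p + (Nat.factorization a p.1 : ℕ∞) = s p + (Nat.factorization b p.1 : ℕ∞))
    {x : ℚ} (hx : x ∈ Qsup r) : (b : ℚ) / (a : ℚ) * x ∈ Qsup s := by
  rcases eq_or_ne x 0 with rfl | hx0
  · exact ⟨0, 1, one_pos, fun p => by simp, by simp⟩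
  have ha' : (a:ℚ) ≠ 0 := Nat.cast_ne_zero.mpr ha.ne'
  have hb' : (b:ℚ) ≠ 0 := Nat.cast_ne_zero.mpr hb.ne'
  have hy0 : (b : ℚ)/a * x ≠ 0 := mul_ne_zero (div_ne_zero hb' ha') hx0
  rw [mem_Qsup] at hx ⊢
  intro p
  haveI := Fact.mk p.2
  have hval : padicValRat p.1 ((b : ℚ)/a * x)
      = (Nat.factorization b p.1 : ℤ) - Nat.factorization a p.1 + padicValRat p.1 x := by
    rw [padicValRat.mul (div_ne_zero hb' ha') hx0, padicValRat.div hb' ha',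
      padicValRat.of_nat, padicValRat.of_nat, Nat.factorization_def _ p.2,
      Nat.factorization_def _ p.2]
  rw [den_fact p.2 _, hval]
  rcases eq_or_ne (s p) ⊤ with hs | hs
  · rw [hs]; exact le_top
  have hr : r p ≠ ⊤ := by
    intro hrt
    have := h p
    rw [hrt, top_add] at this
    rcases (WithTop.add_eq_top).mp this.symm with h1 | h2
    · exact hs h1
    · exact (ENat.coe_ne_top _) h2
  lift r p to ℕ using hr with R hR
  lift s p to ℕ using hs with S hS
  have heq : R + Nat.factorization a p.1 = S + Nat.factorization b p.1 := by
    have h2 := h p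
    rw [← hR, ← hS] at h2
    exact_mod_cast h2
  have hxp : (-padicValRat p.1 x).toNat ≤ R := by
    have h2 := hx p
    rw [den_fact p.2 x, ← hR] at h2
    exact_mod_cast h2
  have key : (-((Nat.factorization b p.1 : ℤ) - Nat.factorization a p.1
      + padicValRat p.1 x)).toNat ≤ S := by omega
  exact_mod_cast key

/-- Finite equivalence of supernatural numbers: `a·n = b·m` for positive integers `a,b`. -/
def FinEquiv (r s : Nat.Primes → ℕ∞) : Prop :=
  ∃ a b : ℕ, 0 < a ∧ 0 < b ∧ ∀ p : Nat.Primes,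
    r p + (Nat.factorization a p.1 : ℕ∞) = s p + (Nat.factorization b p.1 : ℕ∞)

/-- `ℚ(n) = ℚ(m)` iff `n` and `m` have the same exponent sequence; and there is a
positive rational `q` with `q·ℚ(n) = ℚ(m)` iff `n` and `m` are finitely equivalent. -/
theorem stmt_15 (r s : Nat.Primes → ℕ∞) :
    (Qsup r = Qsup s ↔ r = s) ∧
    ((∃ q : ℚ, 0 < q ∧ (fun x => q * x) '' Qsup r = Qsup s) ↔ FinEquiv r s) := by
  have key : ∀ (t u : Nat.Primes → ℕ∞), Qsup t = Qsup u → ∀ p : Nat.Primes, t p ≤ u p := by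
    intro t u htu p
    by_contra hlt
    push_neg at hlt
    have hu : u p ≠ ⊤ := hlt.ne_top
    lift u p to ℕ using hu with U hU
    have hk : ((U + 1 : ℕ) : ℕ∞) ≤ t p := by
      push_cast
      exact Order.add_one_le_of_lt hlt
    have hmem := Qsup_pow_mem p hk
    rw [htu, mem_Qsup] at hmem
    have h2 := hmem p
    haveI := Fact.mk p.2
    rw [den_fact p.2 (((p.1 : ℚ) ^ (U + 1))⁻¹), val_pow_inv] at h2
    rw [← hU] at h2
    have : U + 1 ≤ U := by
      have := h2
      simp only [neg_neg, Int.toNat_natCast] at this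
      exact_mod_cast this
    omega
  constructor
  · constructor
    · intro hQ
      funext p
      exact le_antisymm (key r s hQ p) (key s r hQ.symm p)
    · rintro rfl; rfl
  constructor
  · rintro ⟨q, hq, himg⟩
    have hq0 : q ≠ 0 := hq.ne'
    have hnum : 0 < q.num.natAbs := Int.natAbs_pos.mpr (Rat.num_ne_zero.mpr hq0)
    refine ⟨q.den, q.num.natAbs, q.pos, hnum, ?_⟩
    intro p
    haveI := Fact.mk p.2
    have hvq : padicValRat p.1 q
        = (padicValNat p.1 q.num.natAbs : ℤ) - padicValNat p.1 q.den := rfl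
    have F : ∀ k : ℕ, (k : ℕ∞) ≤ r p →
        ((((k : ℤ) + padicValNat p.1 q.den - padicValNat p.1 q.num.natAbs).toNat : ℕ) : ℕ∞)
          ≤ s p := by
      intro k hk
      have hmem : q * ((p.1 : ℚ) ^ k)⁻¹ ∈ Qsup s := by
        rw [← himg]; exact ⟨_, Qsup_pow_mem p hk, rfl⟩
      have h0 : q * ((p.1 : ℚ) ^ k)⁻¹ ≠ 0 := mul_ne_zero hq0 (pinv_ne p k)
      have h2 := mem_Qsup.mp hmem p
      rw [den_fact p.2 _, padicValRat.mul hq0 (pinv_ne p k), val_pow_inv, hvq] at h2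
      have e : (-((padicValNat p.1 q.num.natAbs : ℤ) - padicValNat p.1 q.den + -(k : ℤ))).toNat
          = ((k : ℤ) + padicValNat p.1 q.den - padicValNat p.1 q.num.natAbs).toNat := by omega
      rw [e] at h2
      exact h2
    have B : ∀ k : ℕ, (k : ℕ∞) ≤ s p →
        ((((k : ℤ) + padicValNat p.1 q.num.natAbs - padicValNat p.1 q.den).toNat : ℕ) : ℕ∞)
          ≤ r p := by
      intro k hk
      have hmem : ((p.1 : ℚ) ^ k)⁻¹ ∈ Qsup s := Qsup_pow_mem p hk
      rw [← himg] at hmem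
      obtain ⟨x, hx, hqx⟩ := hmem
      have hqx' : q * x = ((p.1 : ℚ) ^ k)⁻¹ := hqx
      have hx0 : x ≠ 0 := by
        rintro rfl
        rw [mul_zero] at hqx'
        exact (pinv_ne p k) hqx'.symm
      have hvx : padicValRat p.1 x
          = -(k : ℤ) - ((padicValNat p.1 q.num.natAbs : ℤ) - padicValNat p.1 q.den) := by
        have := congrArg (padicValRat p.1) hqx'
        rw [padicValRat.mul hq0 hx0, val_pow_inv, hvq] at this
        omega
      have h2 := mem_Qsup.mp hx p
      rw [den_fact p.2 x, hvx] at h2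
      have e : (-(-(k : ℤ) - ((padicValNat p.1 q.num.natAbs : ℤ) - padicValNat p.1 q.den))).toNat
          = ((k : ℤ) + padicValNat p.1 q.num.natAbs - padicValNat p.1 q.den).toNat := by omega
      rw [e] at h2
      exact h2
    rw [Nat.factorization_def _ p.2, Nat.factorization_def _ p.2]
    rcases eq_or_ne (r p) ⊤ with hr | hr
    · have hs : s p = ⊤ := by
        by_contra hs
        lift s p to ℕ using hs with S hS
        have h2 := F (S + 1 + padicValNat p.1 q.num.natAbs) (hr ▸ le_top)
        have : ((S + 1 + padicValNat p.1 q.num.natAbs : ℤ) + padicValNat p.1 q.den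
            - padicValNat p.1 q.num.natAbs).toNat ≤ S := by exact_mod_cast h2
        omega
      rw [hr, hs, top_add, top_add]
    · lift r p to ℕ using hr with R hR
      have hs : s p ≠ ⊤ := by
        intro hs
        have h2 := B (R + 1 + padicValNat p.1 q.den) (hs ▸ le_top)
        have : ((R + 1 + padicValNat p.1 q.den : ℤ) + padicValNat p.1 q.num.natAbs
            - padicValNat p.1 q.den).toNat ≤ R := by exact_mod_cast h2
        omega
      lift s p to ℕ using hs with S hS
      have hF := F R le_rfl
      have hB := B S le_rfl
      have hF' : ((R : ℤ) + padicValNat p.1 q.den - padicValNat p.1 q.num.natAbs).toNat ≤ S := by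
        exact_mod_cast hF
      have hB' : ((S : ℤ) + padicValNat p.1 q.num.natAbs - padicValNat p.1 q.den).toNat ≤ R := by
        exact_mod_cast hB
      have : R + padicValNat p.1 q.den = S + padicValNat p.1 q.num.natAbs := by omega
      exact_mod_cast this
  · rintro ⟨a, b, ha, hb, h⟩
    have ha' : (a : ℚ) ≠ 0 := Nat.cast_ne_zero.mpr ha.ne'
    have hb' : (b : ℚ) ≠ 0 := Nat.cast_ne_zero.mpr hb.ne'
    refine ⟨(b : ℚ) / a, div_pos (by exact_mod_cast hb) (by exact_mod_cast ha), ?_⟩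
    ext y
    simp only [Set.mem_image]
    constructor
    · rintro ⟨x, hx, rfl⟩
      exact mul_mem_Qsup ha hb h hx
    · intro hy
      refine ⟨(a : ℚ) / b * y, mul_mem_Qsup hb ha (fun p => (h p).symm) hy, ?_⟩
      field_simp
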